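/- Let X be a locally compact Hausdorff space, k : X × X → [0,∞] a lower semicontinuous symmetric kernel, and let ∅ ≠ H ⊆ L ⊆ X. Then the average set A(H,L), the rendezvous set R(H,L), and each n-th rendezvous set R_n(H,L) (n ≥ 1) are nonempty subsets of [0,∞]. -/

import Mathlib

open MeasureTheory Set ENNReal Filter

variable {X : Type*}

/-- The potential `U^μ(x) = ∫ k(x,y) dμ(y)` of a measure `μ` with respect to the kernel `k`. -/
noncomputable def potential [MeasurableSpace X] (k : X → X → ℝ≥0∞) (μ : Measure X) (x : X) :
    ℝ≥0∞ :=
  ∫⁻ y, k x y ∂μ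

/-- `M1 H` : the regular Borel probability measures concentrated on `H`
(i.e. with outer measure of `H` equal to `1`). -/
def M1 [TopologicalSpace X] [MeasurableSpace X] (H : Set X) : Set (Measure X) :=
  {μ | IsProbabilityMeasure μ ∧ μ.Regular ∧ μ H = 1}

/-- `M1sharp H` : finite convex combinations of Dirac measures at points of `H`. -/
def M1sharp [MeasurableSpace X] (H : Set X) : Set (Measure X) :=
  {μ | ∃ (n : ℕ) (w : Fin n → X) (α : Fin n → ℝ≥0∞),
    (∀ j, w j ∈ H) ∧ (∑ j, α j = 1) ∧ μ = ∑ j, α j • Measure.dirac (w j)}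

/-- The quasi-uniform energy `q(H,L)`. -/
noncomputable def qEnergy [TopologicalSpace X] [MeasurableSpace X] (k : X → X → ℝ≥0∞)
    (H L : Set X) : ℝ≥0∞ :=
  ⨅ μ ∈ M1 H, ⨆ x ∈ L, potential k μ x

/-- The restricted quasi-uniform energy `q^#(H,L)`. -/
noncomputable def qEnergySharp [MeasurableSpace X] (k : X → X → ℝ≥0∞) (H L : Set X) : ℝ≥0∞ :=
  ⨅ μ ∈ M1sharp H, ⨆ x ∈ L, potential k μ x

/-- The dual energy `q̲(H,L)`. -/
noncomputable def qEnergyLow [TopologicalSpace X] [MeasurableSpace X] (k : X → X → ℝ≥0∞)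
    (H L : Set X) : ℝ≥0∞ :=
  ⨆ μ ∈ M1 H, ⨅ x ∈ L, potential k μ x

/-- The restricted dual energy `q̲^#(H,L)`. -/
noncomputable def qEnergyLowSharp [MeasurableSpace X] (k : X → X → ℝ≥0∞) (H L : Set X) : ℝ≥0∞ :=
  ⨆ μ ∈ M1sharp H, ⨅ x ∈ L, potential k μ x

/-- The `n`-th Chebyshev constant `M_n(H,L)`. -/
noncomputable def chebM (k : X → X → ℝ≥0∞) (H L : Set X) (n : ℕ) : ℝ≥0∞ :=
  ⨆ (w : Fin n → X) (_ : ∀ j, w j ∈ H), ⨅ x ∈ L, (∑ j, k x (w j)) / (n : ℝ≥0∞)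

/-- The `n`-th dual Chebyshev constant `M̄_n(H,L)`. -/
noncomputable def chebMbar (k : X → X → ℝ≥0∞) (H L : Set X) (n : ℕ) : ℝ≥0∞ :=
  ⨅ (w : Fin n → X) (_ : ∀ j, w j ∈ H), ⨆ x ∈ L, (∑ j, k x (w j)) / (n : ℝ≥0∞)

/-- The `n`-th diameter `D_n(H)`. -/
noncomputable def diamN (k : X → X → ℝ≥0∞) (H : Set X) (n : ℕ) : ℝ≥0∞ :=
  ⨅ (w : Fin n → X) (_ : ∀ j, w j ∈ H),
    (2 * ∑ p ∈ Finset.univ.filter (fun p : Fin n × Fin n => p.1 < p.2), k (w p.1) (w p.2)) /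
      ((n : ℝ≥0∞) * ((n : ℝ≥0∞) - 1))

/-- The `n`-th rendezvous set `R_n(H,L)`. -/
noncomputable def rendezvousN (k : X → X → ℝ≥0∞) (H L : Set X) (n : ℕ) : Set ℝ≥0∞ :=
  ⋂ (w : Fin n → X) (_ : ∀ j, w j ∈ H),
    Icc (⨅ x ∈ L, (∑ j, k x (w j)) / (n : ℝ≥0∞)) (⨆ x ∈ L, (∑ j, k x (w j)) / (n : ℝ≥0∞))

/-- The rendezvous set `R(H,L) = ⋂_{n ≥ 1} R_n(H,L)`. -/
noncomputable def rendezvous (k : X → X → ℝ≥0∞) (H L : Set X) : Set ℝ≥0∞ :=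
  ⋂ n : ℕ, rendezvousN k H L (n + 1)

/-- The average set `A(H,L)`. -/
noncomputable def averageSet [TopologicalSpace X] [MeasurableSpace X] (k : X → X → ℝ≥0∞)
    (H L : Set X) : Set ℝ≥0∞ :=
  ⋂ μ ∈ M1 H, Icc (⨅ x ∈ L, potential k μ x) (⨆ x ∈ L, potential k μ x)


section RdvHelpers

set_option linter.unusedSectionVars false
set_option maxHeartbeats 1000000

namespace Rdv

variable {X : Type*} [TopologicalSpace X] [MeasurableSpace X] [OpensMeasurableSpace X]
  [T2Space X]

lemma lsc_right {k : X → X → ℝ≥0∞}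
    (hk : LowerSemicontinuous fun p : X × X => k p.1 p.2) (x : X) :
    LowerSemicontinuous fun y => k x y :=
  by have := LowerSemicontinuous.comp hk (Continuous.prodMk_right x); exact this

lemma lsc_left {k : X → X → ℝ≥0∞}
    (hk : LowerSemicontinuous fun p : X × X => k p.1 p.2) (y : X) :
    LowerSemicontinuous fun x => k x y :=
  by have := LowerSemicontinuous.comp hk (Continuous.prodMk_left y); exact this

lemma indicator_sum_le {ι : Type*} (s : Finset ι) (K : ι → Set X)
    (hdisj : (s : Set ι).PairwiseDisjoint K) (d : ι → ℝ≥0∞) (g : X → ℝ≥0∞)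
    (h : ∀ t ∈ s, ∀ y ∈ K t, d t ≤ g y) (y : X) :
    ∑ t ∈ s, (K t).indicator (fun _ => d t) y ≤ g y := by
  by_cases hy : ∃ t ∈ s, y ∈ K t
  · obtain ⟨t₀, ht₀, hyt₀⟩ := hy
    have : ∑ t ∈ s, (K t).indicator (fun _ => d t) y = d t₀ := by
      rw [Finset.sum_eq_single t₀]
      · exact Set.indicator_of_mem hyt₀ _
      · intro t ht hne
        have hy' : y ∉ K t := fun hyt =>
          Set.disjoint_left.mp (hdisj ht ht₀ hne) hyt hyt₀
        exact Set.indicator_of_notMem hy' _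
      · intro h'; exact absurd ht₀ h'
    rw [this]; exact h t₀ ht₀ y hyt₀
  · push_neg at hy
    rw [Finset.sum_eq_zero fun t ht => Set.indicator_of_notMem (hy t ht) _]
    exact zero_le

lemma lintegral_indicator_sum {ι : Type*} (μ : Measure X) (s : Finset ι) (K : ι → Set X)
    (hK : ∀ t ∈ s, MeasurableSet (K t)) (d : ι → ℝ≥0∞) :
    ∫⁻ y, ∑ t ∈ s, (K t).indicator (fun _ => d t) y ∂μ = ∑ t ∈ s, d t * μ (K t) := by
  rw [lintegral_finset_sum _ (fun t ht => measurable_const.indicator (hK t ht))]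
  exact Finset.sum_congr rfl fun t ht => by
    rw [lintegral_indicator (hK t ht), setLIntegral_const]

lemma iSup_min_natCast (a : ℝ≥0∞) : ⨆ N : ℕ, min a (N : ℝ≥0∞) = a := by
  apply le_antisymm (iSup_le fun N => min_le_left _ _)
  rcases eq_or_ne a ⊤ with rfl | ha
  · calc ⊤ = ⨆ n : ℕ, (n : ℝ≥0∞) := ENNReal.iSup_natCast.symm
      _ ≤ _ := iSup_mono fun n => by simp
  · obtain ⟨N, hN⟩ := ENNReal.exists_nat_gt ha
    exact le_iSup_of_le N (by rw [min_eq_left hN.le])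


lemma exists_compacts_of_lt_lintegral (μ : Measure X) [IsFiniteMeasure μ]
    [μ.InnerRegularCompactLTTop] {f : X → ℝ≥0∞} {c : ℝ≥0∞} (hc : c < ∫⁻ y, f y ∂μ) :
    ∃ (s : Finset ℝ≥0∞) (K : ℝ≥0∞ → Set X) (d : ℝ≥0∞ → ℝ≥0∞),
      (∀ a ∈ s, IsCompact (K a)) ∧ (s : Set ℝ≥0∞).PairwiseDisjoint K ∧
      (∀ a ∈ s, 0 < d a) ∧ (∀ a ∈ s, d a ≠ ∞) ∧
      (∀ a ∈ s, ∀ y ∈ K a, d a < f y) ∧ c < ∑ a ∈ s, d a * μ (K a) := by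
  rw [MeasureTheory.lintegral] at hc
  rw [lt_iSup_iff] at hc
  obtain ⟨φ, hc⟩ := hc
  rw [lt_iSup_iff] at hc
  obtain ⟨hφf, hφc⟩ := hc
  classical
  set s₀ : Finset ℝ≥0∞ := φ.range.filter (fun a => a ≠ 0) with hs₀def
  set A : ℝ≥0∞ → Set X := fun a => φ ⁻¹' {a} with hAdef
  have hAmeas : ∀ a, MeasurableSet (A a) := fun a => φ.measurableSet_fiber a
  have hφA : ∀ a, ∀ y ∈ A a, φ y = a := fun a y hy => hy
  have hS : c < ∑ a ∈ s₀, a * μ (A a) := by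
    have : φ.lintegral μ = ∑ a ∈ s₀, a * μ (A a) := by
      rw [SimpleFunc.lintegral]
      exact (Finset.sum_filter_of_ne (fun a _ h => by
        intro ha0; rw [ha0] at h; simp at h)).symm
    rwa [this] at hφc
  -- the case s₀ = ∅ is impossible
  rcases Finset.eq_empty_or_nonempty s₀ with hs₀e | hs₀ne
  · rw [hs₀e] at hS; simp at hS
  -- cap the values at a large natural number
  have hcapsum : (∑ a ∈ s₀, a * μ (A a)) = ⨆ N : ℕ, ∑ a ∈ s₀, min a (N : ℝ≥0∞) * μ (A a) := by
    have hmono : ∀ a : ℝ≥0∞, Monotone (fun N : ℕ => min a (N : ℝ≥0∞) * μ (A a)) :=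
      fun a i j hij => mul_le_mul_left (min_le_min le_rfl (Nat.cast_le.2 hij)) _
    rw [← ENNReal.finsetSum_iSup_of_monotone (ι := ℕ) (f := fun (a : ℝ≥0∞) (N : ℕ) => min a (N : ℝ≥0∞) * μ (A a))
      hmono]
    refine Finset.sum_congr rfl fun a _ => ?_
    rw [← ENNReal.iSup_mul, iSup_min_natCast]
  rw [hcapsum, lt_iSup_iff] at hS
  obtain ⟨N₀, hSN⟩ := hS
  set N : ℕ := N₀ + 1 with hNdef
  set m : ℝ≥0∞ → ℝ≥0∞ := fun a => min a (N : ℝ≥0∞) with hmdef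
  have hSN' : c < ∑ a ∈ s₀, m a * μ (A a) := by
    refine lt_of_lt_of_le hSN (Finset.sum_le_sum fun a _ => mul_le_mul_left ?_ _)
    exact min_le_min le_rfl (Nat.cast_le.2 (Nat.le_succ N₀))
  set S : ℝ≥0∞ := ∑ a ∈ s₀, m a * μ (A a) with hSdef
  have hmtop : ∀ a, m a ≠ ∞ := fun a =>
    ((min_le_right a _).trans_lt (ENNReal.natCast_lt_top N)).ne
  have hmpos : ∀ a ∈ s₀, 0 < m a := by
    intro a ha
    have ha0 : a ≠ 0 := (Finset.mem_filter.mp ha).2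
    exact lt_min (pos_iff_ne_zero.mpr ha0) (by positivity)
  have hStop : S ≠ ∞ := by
    rw [hSdef]
    refine (ENNReal.sum_lt_top.mpr fun a _ => ?_).ne
    exact ENNReal.mul_lt_top (hmtop a).lt_top (measure_lt_top μ _)
  have hS0 : S ≠ 0 := ((zero_le : 0 ≤ c).trans_lt hSN').ne'
  obtain ⟨c', hcc', hc'S⟩ := exists_between hSN'
  have hc'0 : c' ≠ 0 := ((zero_le : 0 ≤ c).trans_lt hcc').ne'
  have hc'top : c' ≠ ∞ := (hc'S.trans_le le_top).ne
  set r : ℝ≥0∞ := c' / S with hrdef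
  have hr0 : r ≠ 0 := (ENNReal.div_pos hc'0 hStop).ne'
  have hrtop : r ≠ ∞ := by
    rw [hrdef, ENNReal.div_eq_inv_mul]
    exact (ENNReal.mul_lt_top (ENNReal.inv_lt_top.mpr (pos_iff_ne_zero.mpr hS0)) hc'top.lt_top).ne
  have hr1 : r < 1 := by
    rw [hrdef, ENNReal.div_lt_iff (Or.inl hS0) (Or.inl hStop), one_mul]
    exact hc'S
  have hrS : r * S = c' := by
    rw [hrdef, mul_comm, ENNReal.mul_div_cancel hS0 hStop]
  set d : ℝ≥0∞ → ℝ≥0∞ := fun a => r * m a with hddef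
  have hdpos : ∀ a ∈ s₀, 0 < d a := fun a ha =>
    ENNReal.mul_pos hr0 (hmpos a ha).ne'
  have hdtop : ∀ a, d a ≠ ∞ := fun a => ENNReal.mul_ne_top hrtop (hmtop a)
  have hdlt : ∀ a ∈ s₀, d a < m a := by
    intro a ha
    have := ENNReal.mul_lt_mul_left (hmpos a ha).ne' (hmtop a) hr1
    rwa [one_mul] at this
  have hT : ∑ a ∈ s₀, d a * μ (A a) = c' := by
    rw [hddef]
    simp only [mul_assoc]
    rw [← Finset.mul_sum, ← hSdef, hrS]
  -- pick ε of room
  obtain ⟨ε, hε0, hεlt⟩ := ENNReal.lt_iff_exists_add_pos_lt.mp hcc'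
  set B : ℝ≥0∞ := ∑ a ∈ s₀, d a with hBdef
  have hB0 : B ≠ 0 := by
    obtain ⟨a, ha⟩ := hs₀ne
    intro h
    exact (hdpos a ha).ne' (Finset.sum_eq_zero_iff.mp h a ha)
  have hBtop : B ≠ ∞ := (ENNReal.sum_lt_top.mpr fun a _ => (hdtop a).lt_top).ne
  set δ : ℝ≥0∞ := (ε : ℝ≥0∞) / B with hδdef
  have hδ0 : δ ≠ 0 := (ENNReal.div_pos (by exact_mod_cast hε0.ne') hBtop).ne'
  -- choose compacts
  have hKex : ∀ a, ∃ K, K ⊆ A a ∧ IsCompact K ∧ (a ∈ s₀ → μ (A a) ≤ μ K + δ) := by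
    intro a
    by_cases hle : μ (A a) ≤ δ
    · exact ⟨∅, empty_subset _, isCompact_empty,
        fun _ => hle.trans (by simp)⟩
    · push_neg at hle
      obtain ⟨K, hKA, hKc, hKμ⟩ := (hAmeas a).exists_lt_isCompact_of_ne_top
        (measure_ne_top μ _) (ENNReal.sub_lt_self (measure_ne_top μ _)
          (fun h => by rw [h] at hle; exact absurd hle (by simp))
          hδ0)
      refine ⟨K, hKA, hKc, fun _ => ?_⟩
      have : μ (A a) - δ ≤ μ K := hKμ.le
      have h2 : μ (A a) ≤ μ K + δ := by
        rw [← tsub_add_cancel_of_le hle.le]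
        exact add_le_add_left this δ
      exact h2
  choose K hKA hKcomp hKμ using hKex
  refine ⟨s₀, K, d, fun a _ => hKcomp a, ?_, hdpos, fun a _ => hdtop a, ?_, ?_⟩
  · intro a ha b hb hab
    refine Set.disjoint_left.mpr fun y hya hyb => hab ?_
    rw [← hφA a y (hKA a hya), ← hφA b y (hKA b hyb)]
  · intro a ha y hy
    calc d a < m a := hdlt a ha
      _ ≤ a := min_le_left _ _
      _ = φ y := (hφA a y (hKA a hy)).symm
      _ ≤ f y := hφf y
  · -- final numeric estimate
    have hstep : ∑ a ∈ s₀, d a * μ (A a) ≤ (∑ a ∈ s₀, d a * μ (K a)) + (ε : ℝ≥0∞) := by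
      calc ∑ a ∈ s₀, d a * μ (A a)
          ≤ ∑ a ∈ s₀, d a * (μ (K a) + δ) :=
            Finset.sum_le_sum fun a ha => mul_le_mul_right (hKμ a ha) _
        _ = (∑ a ∈ s₀, d a * μ (K a)) + B * δ := by
            rw [hBdef, Finset.sum_mul]
            rw [← Finset.sum_add_distrib]
            exact Finset.sum_congr rfl fun a _ => by ring
        _ ≤ (∑ a ∈ s₀, d a * μ (K a)) + (ε : ℝ≥0∞) := by
            refine add_le_add_right ?_ _
            rw [hδdef]
            exact ENNReal.mul_div_le
    rw [hT] at hstep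
    have : c + (ε : ℝ≥0∞) < (∑ a ∈ s₀, d a * μ (K a)) + (ε : ℝ≥0∞) :=
      lt_of_lt_of_le hεlt hstep
    exact (ENNReal.add_lt_add_iff_right ENNReal.coe_ne_top).mp this


/-- covering lemma: if `k > d t` on `{x₀} × K t` for finitely many compacts `K t`,
then the same holds on `U × K t` for some open neighborhood `U` of `x₀`. -/
lemma exists_open_forall_gt {k : X → X → ℝ≥0∞}
    (hk : LowerSemicontinuous fun p : X × X => k p.1 p.2)
    {ι : Type*} (s : Finset ι) (K : ι → Set X) (hKc : ∀ t ∈ s, IsCompact (K t))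
    (d : ι → ℝ≥0∞) (x₀ : X) (h : ∀ t ∈ s, ∀ y ∈ K t, d t < k x₀ y) :
    ∃ U : Set X, IsOpen U ∧ x₀ ∈ U ∧ ∀ x ∈ U, ∀ t ∈ s, ∀ y ∈ K t, d t < k x y := by
  have key : ∀ t ∈ s, ∃ U : Set X, IsOpen U ∧ x₀ ∈ U ∧ ∀ x ∈ U, ∀ y ∈ K t, d t < k x y := by
    intro t ht
    have hopen : IsOpen {p : X × X | d t < k p.1 p.2} :=
      hk.isOpen_preimage (d t)
    have hsub : {x₀} ×ˢ K t ⊆ {p : X × X | d t < k p.1 p.2} := by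
      rintro ⟨x, y⟩ ⟨hx, hy⟩
      obtain rfl : x = x₀ := hx
      exact h t ht y hy
    obtain ⟨U, V, hU, hV, hxU, hKV, hUV⟩ :=
      generalized_tube_lemma isCompact_singleton (hKc t ht) hopen hsub
    exact ⟨U, hU, hxU rfl, fun x hx y hy => hUV (show (x, y) ∈ U ×ˢ V from ⟨hx, hKV hy⟩)⟩
  choose! U hUopen hUmem hUprop using key
  refine ⟨⋂ t ∈ s, U t, isOpen_biInter_finset hUopen, Set.mem_biInter hUmem, ?_⟩
  intro x hx t ht y hy
  exact hUprop t ht x (Set.mem_iInter₂.mp hx t ht) y hy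

/-- The potential of a lower semicontinuous kernel w.r.t. a finite inner regular measure
is lower semicontinuous. -/
lemma lsc_potential {k : X → X → ℝ≥0∞}
    (hk : LowerSemicontinuous fun p : X × X => k p.1 p.2)
    (μ : Measure X) [IsFiniteMeasure μ] [μ.InnerRegularCompactLTTop] :
    LowerSemicontinuous fun x => ∫⁻ y, k x y ∂μ := by
  intro x₀ c hc
  obtain ⟨s, K, d, hKc, hdisj, hdpos, hdtop, hdlt, hsum⟩ :=
    exists_compacts_of_lt_lintegral μ hc
  obtain ⟨U, hUopen, hUmem, hUprop⟩ :=
    exists_open_forall_gt hk s K hKc d x₀ hdlt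
  refine Filter.eventually_of_mem (hUopen.mem_nhds hUmem) fun x hx => ?_
  calc c < ∑ a ∈ s, d a * μ (K a) := hsum
    _ = ∫⁻ y, ∑ t ∈ s, (K t).indicator (fun _ => d t) y ∂μ :=
        (lintegral_indicator_sum μ s K
          (fun t ht => ((hKc t ht).isClosed).measurableSet) d).symm
    _ ≤ ∫⁻ y, k x y ∂μ :=
        lintegral_mono (indicator_sum_le s K hdisj d (k x)
          (fun t ht y hy => (hUprop x hx t ht y hy).le))

/-- One-sided Fubini-type inequality for lower semicontinuous kernels and
finite inner regular measures. -/
theorem lintegral_lintegral_swap_le {k : X → X → ℝ≥0∞}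
    (hk : LowerSemicontinuous fun p : X × X => k p.1 p.2)
    (μ ν : Measure X) [IsFiniteMeasure μ] [IsFiniteMeasure ν]
    [μ.InnerRegularCompactLTTop] [ν.InnerRegularCompactLTTop] :
    ∫⁻ x, ∫⁻ y, k x y ∂μ ∂ν ≤ ∫⁻ y, ∫⁻ x, k x y ∂ν ∂μ := by
  refine le_of_forall_lt fun c hc => ?_
  obtain ⟨s, C, b, hCc, hCdisj, hbpos, hbtop, hblt, hsum⟩ :=
    exists_compacts_of_lt_lintegral ν hc
  classical
  -- uniform neighborhood data
  have hW : ∀ i ∈ s, ∀ x ∈ C i, ∃ W : Set X, IsOpen W ∧ x ∈ W ∧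
      ∃ ρ : X → ℝ≥0∞, Measurable ρ ∧
        (∀ x' ∈ W, ∀ y, ρ y ≤ k x' y) ∧ b i < ∫⁻ y, ρ y ∂μ := by
    intro i hi x hx
    obtain ⟨s', K, d, hKc, hKdisj, hdpos, hdtop, hdlt, hdsum⟩ :=
      exists_compacts_of_lt_lintegral μ (hblt i hi x hx)
    obtain ⟨W, hWo, hWm, hWp⟩ := exists_open_forall_gt hk s' K hKc d x hdlt
    refine ⟨W, hWo, hWm, fun y => ∑ t ∈ s', (K t).indicator (fun _ => d t) y,
      ?_, ?_, ?_⟩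
    · exact Finset.measurable_sum _ fun t ht =>
        measurable_const.indicator ((hKc t ht).isClosed.measurableSet)
    · intro x' hx' y
      exact indicator_sum_le s' K hKdisj d (k x')
        (fun t ht z hz => (hWp x' hx' t ht z hz).le) y
    · rw [lintegral_indicator_sum μ s' K
        (fun t ht => (hKc t ht).isClosed.measurableSet) d]
      exact hdsum
  -- per-index decomposition of C i
  have hPer : ∀ i ∈ s, ∃ (M : ℕ) (D : ℕ → Set X) (ρ : ℕ → X → ℝ≥0∞),
      (∀ l, MeasurableSet (D l)) ∧ Pairwise (Function.onFun Disjoint D) ∧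
      (∀ l, D l ⊆ C i) ∧ (ν (C i) = ∑ l ∈ Finset.range M, ν (D l)) ∧
      (∀ l, Measurable (ρ l)) ∧ (∀ l, ∀ x ∈ D l, ∀ y, ρ l y ≤ k x y) ∧
      (∀ l ∈ Finset.range M, b i ≤ ∫⁻ y, ρ l y ∂μ) := by
    intro i hi
    choose! W hWo hWm ρ hρm hρle hρint using hW i hi
    obtain ⟨F, hFcov⟩ := (hCc i hi).elim_nhds_subcover'
      (fun x _ => W x) (fun x hx => (hWo x hx).mem_nhds (hWm x hx))
    set lst := F.toList with hlst
    set M := lst.length with hM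
    have hlmem : ∀ (h : Fin M), (lst.get h : X) ∈ C i := fun h => (lst.get h).2
    set V : ℕ → Set X := fun l =>
      if h : l < M then C i ∩ W ((lst.get ⟨l, h⟩ : {a // a ∈ C i}) : X) else ∅ with hV
    have hVmeas : ∀ l, MeasurableSet (V l) := by
      intro l
      by_cases h : l < M
      · rw [hV]; simp only [dif_pos h]
        exact ((hCc i hi).isClosed.measurableSet).inter
          (hWo _ (hlmem ⟨l, h⟩)).measurableSet
      · rw [hV]; simp only [dif_neg h]
        exact MeasurableSet.empty
    have hVsub : ∀ l, V l ⊆ C i := by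
      intro l
      by_cases h : l < M
      · rw [hV]; simp only [dif_pos h]; exact inter_subset_left
      · rw [hV]; simp only [dif_neg h]; exact empty_subset _
    have hVcov : C i ⊆ ⋃ l, V l := by
      intro x hx
      obtain ⟨y, hyF, hyW⟩ := Set.mem_iUnion₂.mp (hFcov hx)
      obtain ⟨n, hn⟩ := List.mem_iff_get.mp (Finset.mem_toList.mpr hyF)
      refine Set.mem_iUnion.mpr ⟨n.1, ?_⟩
      rw [hV]
      simp only [dif_pos (show (n.1 : ℕ) < M from n.2)]
      constructor
      · exact hx
      · rw [show (⟨n.1, n.2⟩ : Fin M) = n from rfl, hn]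
        exact hyW
    set D : ℕ → Set X := disjointed V with hD
    have hDmeas : ∀ l, MeasurableSet (D l) := MeasurableSet.disjointed hVmeas
    have hDdisj : Pairwise (Function.onFun Disjoint D) := disjoint_disjointed V
    have hDsubV : ∀ l, D l ⊆ V l := disjointed_subset V
    refine ⟨M, D, fun l => if h : l < M then ρ ((lst.get ⟨l, h⟩ : {a // a ∈ C i}) : X) else 0,
      hDmeas, hDdisj, fun l => (hDsubV l).trans (hVsub l), ?_, ?_, ?_, ?_⟩
    · -- measure decomposition
      have h1 : ν (⋃ l, D l) = ν (C i) := by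
        rw [hD, iUnion_disjointed]
        exact le_antisymm (measure_mono (Set.iUnion_subset hVsub))
          (measure_mono hVcov)
      rw [← h1, measure_iUnion hDdisj hDmeas]
      refine tsum_eq_sum fun l hl => ?_
      have hlM : ¬ l < M := fun h => hl (Finset.mem_range.mpr h)
      have hVl : V l = ∅ := by
        show (if h : l < M then C i ∩ W ((lst.get ⟨l, h⟩ : {a // a ∈ C i}) : X) else ∅) = ∅
        rw [dif_neg hlM]
      have hDl : D l = ∅ := Set.subset_empty_iff.mp (hVl ▸ hDsubV l)
      rw [hDl, measure_empty]
    · intro l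
      by_cases h : l < M
      · simp only [dif_pos h]
        exact hρm _ (hlmem ⟨l, h⟩)
      · simp only [dif_neg h]
        exact measurable_const
    · intro l x hx y
      by_cases h : l < M
      · simp only [dif_pos h]
        have hxV := hDsubV l hx
        rw [hV] at hxV
        simp only [dif_pos h] at hxV
        exact hρle _ (hlmem ⟨l, h⟩) x hxV.2 y
      · exfalso
        have hxV := hDsubV l hx
        rw [hV] at hxV
        simp only [dif_neg h] at hxV
        exact hxV
    · intro l hl
      have h : l < M := Finset.mem_range.mp hl
      simp only [dif_pos h]
      exact (hρint _ (hlmem ⟨l, h⟩)).le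
  -- assemble the global minorant
  choose! M D ρ hDmeas hDdisj hDsub hνC hρmeas hρle hρint using hPer
  set T : Finset ((_ : ℝ≥0∞) × ℕ) := s.sigma fun i => Finset.range (M i) with hT
  have hmemT : ∀ p : (_ : ℝ≥0∞) × ℕ, p ∈ T → p.1 ∈ s ∧ p.2 ∈ Finset.range (M p.1) := by
    intro p hp
    exact Finset.mem_sigma.mp hp
  set DD : ((_ : ℝ≥0∞) × ℕ) → Set X := fun p => D p.1 p.2 with hDD
  have hDDmeas : ∀ p ∈ T, MeasurableSet (DD p) := fun p hp =>
    hDmeas p.1 (hmemT p hp).1 p.2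
  have hTdisj : (↑T : Set ((_ : ℝ≥0∞) × ℕ)).PairwiseDisjoint DD := by
    rintro ⟨i, l⟩ hp ⟨i', l'⟩ hq hne
    have hp' := hmemT _ (Finset.mem_coe.mp hp)
    have hq' := hmemT _ (Finset.mem_coe.mp hq)
    by_cases hii : i = i'
    · subst hii
      have hll : l ≠ l' := fun h => hne (by rw [h])
      exact hDdisj i hp'.1 hll
    · exact Disjoint.mono (hDsub i hp'.1 l) (hDsub i' hq'.1 l')
        (hCdisj hp'.1 hq'.1 hii)
  set h₀ : X → ℝ≥0∞ := fun y => ∑ p ∈ T, ρ p.1 p.2 y * ν (DD p) with hh₀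
  have ha : ∀ y, h₀ y ≤ ∫⁻ x, k x y ∂ν := by
    intro y
    have e1 : h₀ y = ∫⁻ x, ∑ p ∈ T, (DD p).indicator (fun _ => ρ p.1 p.2 y) x ∂ν := by
      rw [lintegral_indicator_sum ν T DD hDDmeas (fun p => ρ p.1 p.2 y)]
    rw [e1]
    refine lintegral_mono fun x => ?_
    exact indicator_sum_le T DD hTdisj (fun p => ρ p.1 p.2 y) (fun x => k x y)
      (fun p hp x' hx' => hρle p.1 (hmemT p hp).1 p.2 x' hx' y) x
  have hb' : ∑ a ∈ s, b a * ν (C a) ≤ ∫⁻ y, h₀ y ∂μ := by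
    have e2 : ∫⁻ y, h₀ y ∂μ = ∑ p ∈ T, (∫⁻ y, ρ p.1 p.2 y ∂μ) * ν (DD p) := by
      rw [hh₀]
      rw [lintegral_finset_sum T (fun p hp => (hρmeas p.1 (hmemT p hp).1 p.2).mul_const _)]
      exact Finset.sum_congr rfl fun p hp =>
        lintegral_mul_const _ (hρmeas p.1 (hmemT p hp).1 p.2)
    rw [e2]
    calc ∑ a ∈ s, b a * ν (C a)
        = ∑ a ∈ s, ∑ l ∈ Finset.range (M a), b a * ν (D a l) := by
          refine Finset.sum_congr rfl fun a ha' => ?_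
          rw [← Finset.mul_sum, ← hνC a ha']
      _ = ∑ p ∈ T, b p.1 * ν (DD p) := by
          rw [hT, Finset.sum_sigma]
      _ ≤ ∑ p ∈ T, (∫⁻ y, ρ p.1 p.2 y ∂μ) * ν (DD p) :=
          Finset.sum_le_sum fun p hp => mul_le_mul_left
            (hρint p.1 (hmemT p hp).1 p.2 (hmemT p hp).2) _
  calc c < ∑ a ∈ s, b a * ν (C a) := hsum
    _ ≤ ∫⁻ y, h₀ y ∂μ := hb'
    _ ≤ ∫⁻ y, ∫⁻ x, k x y ∂ν ∂μ := lintegral_mono ha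


lemma biInf_le_lintegral (ν : Measure X) [IsProbabilityMeasure ν] {H L : Set X}
    (hHL : H ⊆ L) (hνH : ν H = 1) {f : X → ℝ≥0∞} (hf : Measurable f) :
    ⨅ x ∈ L, f x ≤ ∫⁻ x, f x ∂ν := by
  set c := ⨅ x ∈ L, f x with hc
  have hBmeas : MeasurableSet {x | f x < c} := measurableSet_lt hf measurable_const
  have hsub : H ⊆ {x | f x < c}ᶜ := fun x hx =>
    not_lt.mpr (biInf_le f (hHL hx))
  have h1 : ν {x | f x < c}ᶜ = 1 :=
    le_antisymm prob_le_one (hνH ▸ measure_mono hsub)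
  have h0 : ν {x | f x < c} = 0 := by
    have h2 := measure_add_measure_compl (μ := ν) hBmeas
    rw [h1, measure_univ] at h2
    have h3 : ν {x | f x < c} + 1 = 0 + 1 := by rw [h2, zero_add]
    exact (ENNReal.add_left_inj (by norm_num)).mp h3
  have hae : ∀ᵐ x ∂ν, c ≤ f x := by
    rw [ae_iff]
    simpa [not_le] using h0
  calc c = ∫⁻ _, c ∂ν := by rw [lintegral_const, measure_univ, mul_one]
    _ ≤ ∫⁻ x, f x ∂ν := lintegral_mono_ae hae

lemma lintegral_le_biSup (ν : Measure X) [IsProbabilityMeasure ν] {H L : Set X}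
    (hHL : H ⊆ L) (hνH : ν H = 1) {f : X → ℝ≥0∞} (hf : Measurable f) :
    ∫⁻ x, f x ∂ν ≤ ⨆ x ∈ L, f x := by
  set c := ⨆ x ∈ L, f x with hc
  have hBmeas : MeasurableSet {x | c < f x} := measurableSet_lt measurable_const hf
  have hsub : H ⊆ {x | c < f x}ᶜ := fun x hx =>
    not_lt.mpr (le_biSup f (hHL hx))
  have h1 : ν {x | c < f x}ᶜ = 1 :=
    le_antisymm prob_le_one (hνH ▸ measure_mono hsub)
  have h0 : ν {x | c < f x} = 0 := by
    have h2 := measure_add_measure_compl (μ := ν) hBmeas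
    rw [h1, measure_univ] at h2
    have h3 : ν {x | c < f x} + 1 = 0 + 1 := by rw [h2, zero_add]
    exact (ENNReal.add_left_inj (by norm_num)).mp h3
  have hae : ∀ᵐ x ∂ν, f x ≤ c := by
    rw [ae_iff]
    simpa [not_le] using h0
  calc ∫⁻ x, f x ∂ν ≤ ∫⁻ _, c ∂ν := lintegral_mono_ae hae
    _ = c := by rw [lintegral_const, measure_univ, mul_one]

lemma biInf_le_avg {L : Set X} {n : ℕ} (hn : n ≠ 0) (g : X → ℝ≥0∞) (w : Fin n → X)
    (hw : ∀ j, w j ∈ L) :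
    ⨅ x ∈ L, g x ≤ (∑ j, g (w j)) / (n : ℝ≥0∞) := by
  have h1 : (n : ℝ≥0∞) * (⨅ x ∈ L, g x) ≤ ∑ j, g (w j) := by
    calc (n : ℝ≥0∞) * (⨅ x ∈ L, g x) = ∑ _j : Fin n, ⨅ x ∈ L, g x := by
          rw [Finset.sum_const, Finset.card_univ, Fintype.card_fin, nsmul_eq_mul]
      _ ≤ ∑ j, g (w j) := Finset.sum_le_sum fun j _ => biInf_le g (hw j)
  calc ⨅ x ∈ L, g x = (n : ℝ≥0∞) * (⨅ x ∈ L, g x) / (n : ℝ≥0∞) := by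
        rw [mul_comm, mul_div_assoc, ENNReal.div_self (by exact_mod_cast hn)
          (ENNReal.natCast_ne_top n), mul_one]
    _ ≤ (∑ j, g (w j)) / (n : ℝ≥0∞) := ENNReal.div_le_div_right h1 _

lemma avg_le_biSup {L : Set X} {n : ℕ} (hn : n ≠ 0) (g : X → ℝ≥0∞) (w : Fin n → X)
    (hw : ∀ j, w j ∈ L) :
    (∑ j, g (w j)) / (n : ℝ≥0∞) ≤ ⨆ x ∈ L, g x := by
  have h1 : ∑ j, g (w j) ≤ (n : ℝ≥0∞) * (⨆ x ∈ L, g x) := by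
    calc ∑ j, g (w j) ≤ ∑ _j : Fin n, ⨆ x ∈ L, g x :=
          Finset.sum_le_sum fun j _ => le_biSup g (hw j)
      _ = (n : ℝ≥0∞) * (⨆ x ∈ L, g x) := by
          rw [Finset.sum_const, Finset.card_univ, Fintype.card_fin, nsmul_eq_mul]
  calc (∑ j, g (w j)) / (n : ℝ≥0∞) ≤ (n : ℝ≥0∞) * (⨆ x ∈ L, g x) / (n : ℝ≥0∞) :=
        ENNReal.div_le_div_right h1 _
    _ = ⨆ x ∈ L, g x := by
        rw [mul_comm, mul_div_assoc, ENNReal.div_self (by exact_mod_cast hn)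
          (ENNReal.natCast_ne_top n), mul_one]

lemma lintegral_avg (ν : Measure X) {k : X → X → ℝ≥0∞} {n : ℕ} (w : Fin n → X)
    (hmeas : ∀ j, Measurable fun x => k x (w j)) :
    ∫⁻ x, (∑ j, k x (w j)) / (n : ℝ≥0∞) ∂ν
      = (∑ j, ∫⁻ x, k x (w j) ∂ν) / (n : ℝ≥0∞) := by
  simp only [div_eq_mul_inv]
  rw [lintegral_mul_const _ (Finset.measurable_sum _ fun j _ => hmeas j),
    lintegral_finset_sum _ fun j _ => hmeas j]


end Rdv

end RdvHelpers

set_option maxHeartbeats 1000000 in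
theorem rendezvous_sets_nonempty
    {X : Type*} [TopologicalSpace X] [LocallyCompactSpace X] [T2Space X]
    [MeasurableSpace X] [BorelSpace X]
    (k : X → X → ℝ≥0∞)
    (hk : LowerSemicontinuous fun p : X × X => k p.1 p.2)
    (hksymm : ∀ x y, k x y = k y x)
    (H L : Set X) (hH : H.Nonempty) (hHL : H ⊆ L) :
    (averageSet k H L).Nonempty ∧ (rendezvous k H L).Nonempty ∧
    ∀ n : ℕ, 1 ≤ n → (rendezvousN k H L n).Nonempty := by
  classical
  have hsect_l : ∀ y, Measurable fun x => k x y := fun y => (Rdv.lsc_left hk y).measurable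
  set aLow := ⨆ μ ∈ M1 (X := X) H, ⨅ x ∈ L, potential k μ x with haLow
  set aCfg := ⨆ (m : ℕ) (w : Fin (m + 1) → X) (_ : ∀ j, w j ∈ H),
      ⨅ x ∈ L, (∑ j, k x (w j)) / ((m + 1 : ℕ) : ℝ≥0∞) with haCfg
  set a := max aLow aCfg with ha
  have hpmeas : ∀ (n : ℕ) (w : Fin n → X),
      Measurable fun x => (∑ j, k x (w j)) / (n : ℝ≥0∞) :=
    fun n w => (Finset.measurable_sum _ fun j _ => hsect_l (w j)).div_const _
  have hint : ∀ (μ : Measure X), ∀ (n : ℕ) (w : Fin n → X),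
      ∫⁻ x, (∑ j, k x (w j)) / (n : ℝ≥0∞) ∂μ
        = (∑ j, potential k μ (w j)) / (n : ℝ≥0∞) := by
    intro μ n w
    rw [Rdv.lintegral_avg μ w fun j => hsect_l (w j)]
    congr 1
    exact Finset.sum_congr rfl fun j _ => lintegral_congr fun x => hksymm x (w j)
  -- measure vs measure
  have hX1 : ∀ μ ∈ M1 (X := X) H, ∀ ν ∈ M1 (X := X) H,
      (⨅ x ∈ L, potential k μ x) ≤ ⨆ x ∈ L, potential k ν x := by
    rintro μ ⟨hμp, hμr, hμH⟩ ν ⟨hνp, hνr, hνH⟩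
    haveI := hμp; haveI := hμr; haveI := hνp; haveI := hνr
    calc (⨅ x ∈ L, potential k μ x) ≤ ∫⁻ x, potential k μ x ∂ν :=
        Rdv.biInf_le_lintegral ν hHL hνH (Rdv.lsc_potential hk μ).measurable
      _ ≤ ∫⁻ y, ∫⁻ x, k x y ∂ν ∂μ := Rdv.lintegral_lintegral_swap_le hk μ ν
      _ = ∫⁻ y, potential k ν y ∂μ :=
        lintegral_congr fun y => lintegral_congr fun x => hksymm x y
      _ ≤ ⨆ x ∈ L, potential k ν x :=
        Rdv.lintegral_le_biSup μ hHL hμH (Rdv.lsc_potential hk ν).measurable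
  -- measure vs configuration
  have hX2 : ∀ μ ∈ M1 (X := X) H, ∀ (m : ℕ) (w : Fin (m + 1) → X), (∀ j, w j ∈ H) →
      (⨅ x ∈ L, potential k μ x)
        ≤ ⨆ x ∈ L, (∑ j, k x (w j)) / ((m + 1 : ℕ) : ℝ≥0∞) := by
    rintro μ ⟨hμp, hμr, hμH⟩ m w hw
    haveI := hμp; haveI := hμr
    calc (⨅ x ∈ L, potential k μ x)
        ≤ (∑ j, potential k μ (w j)) / ((m + 1 : ℕ) : ℝ≥0∞) :=
          Rdv.biInf_le_avg (Nat.succ_ne_zero m) _ w fun j => hHL (hw j)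
      _ = ∫⁻ x, (∑ j, k x (w j)) / ((m + 1 : ℕ) : ℝ≥0∞) ∂μ := (hint μ _ w).symm
      _ ≤ ⨆ x ∈ L, (∑ j, k x (w j)) / ((m + 1 : ℕ) : ℝ≥0∞) :=
          Rdv.lintegral_le_biSup μ hHL hμH (hpmeas _ w)
  -- configuration vs measure
  have hX3 : ∀ (m : ℕ) (w : Fin (m + 1) → X), (∀ j, w j ∈ H) → ∀ ν ∈ M1 (X := X) H,
      (⨅ x ∈ L, (∑ j, k x (w j)) / ((m + 1 : ℕ) : ℝ≥0∞))
        ≤ ⨆ x ∈ L, potential k ν x := by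
    rintro m w hw ν ⟨hνp, hνr, hνH⟩
    haveI := hνp; haveI := hνr
    calc (⨅ x ∈ L, (∑ j, k x (w j)) / ((m + 1 : ℕ) : ℝ≥0∞))
        ≤ ∫⁻ x, (∑ j, k x (w j)) / ((m + 1 : ℕ) : ℝ≥0∞) ∂ν :=
          Rdv.biInf_le_lintegral ν hHL hνH (hpmeas _ w)
      _ = (∑ j, potential k ν (w j)) / ((m + 1 : ℕ) : ℝ≥0∞) := hint ν _ w
      _ ≤ ⨆ x ∈ L, potential k ν x :=
          Rdv.avg_le_biSup (Nat.succ_ne_zero m) _ w fun j => hHL (hw j)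
  -- configuration vs configuration
  have hX4 : ∀ (m m' : ℕ) (w : Fin (m + 1) → X) (w' : Fin (m' + 1) → X),
      (∀ j, w j ∈ H) → (∀ j, w' j ∈ H) →
      (⨅ x ∈ L, (∑ j, k x (w j)) / ((m + 1 : ℕ) : ℝ≥0∞))
        ≤ ⨆ x ∈ L, (∑ j, k x (w' j)) / ((m' + 1 : ℕ) : ℝ≥0∞) := by
    intro m m' w w' hw hw'
    set c₁ : ℝ≥0∞ := ((m + 1 : ℕ) : ℝ≥0∞) with hc₁
    set c₂ : ℝ≥0∞ := ((m' + 1 : ℕ) : ℝ≥0∞) with hc₂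
    have key : (∑ i, (∑ j, k (w' i) (w j)) / c₁) / c₂
        = (∑ j, (∑ i, k (w j) (w' i)) / c₂) / c₁ := by
      have e : (∑ i, ∑ j, k (w' i) (w j)) = ∑ j, ∑ i, k (w j) (w' i) := by
        rw [Finset.sum_comm]
        exact Finset.sum_congr rfl fun j _ => Finset.sum_congr rfl fun i _ =>
          hksymm (w' i) (w j)
      simp only [div_eq_mul_inv]
      rw [← Finset.sum_mul, ← Finset.sum_mul, e, mul_right_comm]
    calc (⨅ x ∈ L, (∑ j, k x (w j)) / c₁)
        ≤ (∑ i, (∑ j, k (w' i) (w j)) / c₁) / c₂ :=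
          Rdv.biInf_le_avg (Nat.succ_ne_zero m')
            (fun x => (∑ j, k x (w j)) / c₁) w' fun i => hHL (hw' i)
      _ = (∑ j, (∑ i, k (w j) (w' i)) / c₂) / c₁ := key
      _ ≤ ⨆ x ∈ L, (∑ j, k x (w' j)) / c₂ :=
          Rdv.avg_le_biSup (Nat.succ_ne_zero m)
            (fun x => (∑ j, k x (w' j)) / c₂) w fun j => hHL (hw j)
  -- membership in the n-th rendezvous set
  have hmemN : ∀ n : ℕ, 1 ≤ n → a ∈ rendezvousN k H L n := by
    intro n hn
    obtain ⟨m, rfl⟩ : ∃ m, n = m + 1 := ⟨n - 1, (Nat.succ_pred_eq_of_pos hn).symm⟩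
    rw [rendezvousN]
    refine Set.mem_iInter.mpr fun w => Set.mem_iInter.mpr fun hw => ⟨?_, ?_⟩
    · refine le_trans ?_ (le_max_right aLow aCfg)
      rw [haCfg]
      exact le_iSup_of_le m (le_iSup_of_le w (le_iSup_of_le hw le_rfl))
    · refine max_le ?_ ?_
      · rw [haLow]
        exact iSup₂_le fun μ hμ => hX2 μ hμ m w hw
      · rw [haCfg]
        exact iSup_le fun m' => iSup_le fun w' => iSup_le fun hw' =>
          hX4 m' m w' w hw' hw
  refine ⟨⟨a, ?_⟩, ⟨a, ?_⟩, fun n hn => ⟨a, hmemN n hn⟩⟩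
  · rw [averageSet]
    refine Set.mem_iInter₂.mpr fun μ hμ => ⟨?_, ?_⟩
    · refine le_trans ?_ (le_max_left aLow aCfg)
      rw [haLow]
      exact le_iSup₂_of_le μ hμ le_rfl
    · refine max_le ?_ ?_
      · rw [haLow]
        exact iSup₂_le fun ν hν => hX1 ν hν μ hμ
      · rw [haCfg]
        exact iSup_le fun m => iSup_le fun w => iSup_le fun hw => hX3 m w hw μ hμ
  · rw [rendezvous]
    exact Set.mem_iInter.mpr fun n => hmemN (n + 1) (Nat.le_add_left 1 n)
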